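/- Fix an integer K ≥ 2 and a real p ∈ (0,1). Let reals g(j,k) for 1 ≤ j ≤ k ≤ K satisfy, for every k ∈ {2,…,K}: g(j,k) > 0 for all j ∈ {1,…,k}, Σ_{j=1}^k g(j,k) = 1, and g(j+1,k) ≤ p·g(j,k) for all j ∈ {1,…,k−1}. Define D(1) = 1/(1 − K·g(K,K)) and, recursively for r = 2,…,K−1, D(r) = (K−r+1)·[Σ_{i=1}^{r−1} (g(K−r+1, K−i+1) − g(K−r+2, K−i+1))·D(i)] / (1 − (K−r+1)·g(K−r+1, K−r+1)). Then Σ_{r=1}^{K−1} D(r) = (1+p)/(1−p) + Σ_{r=1}^{K−2} (1−p)·p^{K−r}/((K−r)·p^{K−r+1} − (K−r+1)·p^{K−r} + 1) holds if and only if g(j,k) = (1−p)·p^{j−1}/(1−p^k) for every k ∈ {2,…,K} and j ∈ {1,…,k}. -/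

import Mathlib

lemma sum_Icc_eq_range {M : Type*} [AddCommMonoid M] (f : ℕ → M) (a b : ℕ) :
    ∑ j ∈ Finset.Icc a b, f (j - a) = ∑ i ∈ Finset.range (b + 1 - a), f i := by
  refine Finset.sum_nbij' (fun j => j - a) (fun i => i + a) ?_ ?_ ?_ ?_ ?_ <;>
    intro x hx <;> simp only [Finset.mem_Icc, Finset.mem_range] at * <;> omega

lemma geom_Icc (p : ℝ) (a b : ℕ) :
    (1 - p) * ∑ j ∈ Finset.Icc a b, p ^ (j - a) = 1 - p ^ (b + 1 - a) := by
  rw [sum_Icc_eq_range (fun i => p ^ i) a b]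
  have := geom_sum_mul p (b + 1 - a)
  nlinarith [this]

lemma dl_pos (p : ℝ) (hp0 : 0 < p) (hp1 : p < 1) (s : ℕ) (hs : 1 ≤ s) :
    0 < 1 - ((s : ℝ) + 1) * p ^ s + (s : ℝ) * p ^ (s + 1) := by
  have hiden : (1 - ((s : ℝ) + 1) * p ^ s + (s : ℝ) * p ^ (s + 1))
      = (1 - p) * ∑ i ∈ Finset.range s, (p ^ i - p ^ s) := by
    rw [Finset.sum_sub_distrib, Finset.sum_const, Finset.card_range, nsmul_eq_mul]
    have := geom_sum_mul p s
    have hps : p ^ (s + 1) = p ^ s * p := pow_succ p s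
    nlinarith [this]
  rw [hiden]
  apply mul_pos (by linarith)
  apply Finset.sum_pos
  · intro i hi
    simp only [Finset.mem_range] at hi
    have : p ^ s < p ^ i := pow_lt_pow_right_of_lt_one₀ hp0 hp1 hi
    linarith
  · exact Finset.nonempty_range_iff.mpr (by omega)

set_option maxHeartbeats 2000000 in
theorem stmt3 (K : ℕ) (hK : 2 ≤ K) (p : ℝ) (hp0 : 0 < p) (hp1 : p < 1)
    (g : ℕ → ℕ → ℝ) (D : ℕ → ℝ)
    (hpos : ∀ k ∈ Finset.Icc 2 K, ∀ j ∈ Finset.Icc 1 k, 0 < g j k)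
    (hsum : ∀ k ∈ Finset.Icc 2 K, ∑ j ∈ Finset.Icc 1 k, g j k = 1)
    (hsep : ∀ k ∈ Finset.Icc 2 K, ∀ j ∈ Finset.Icc 1 (k - 1), g (j + 1) k ≤ p * g j k)
    (hD1 : D 1 = 1 / (1 - (K : ℝ) * g K K))
    (hDr : ∀ r ∈ Finset.Icc 2 (K - 1),
      D r = ((K - r + 1 : ℕ) : ℝ) *
        (∑ i ∈ Finset.Icc 1 (r - 1),
          (g (K - r + 1) (K - i + 1) - g (K - r + 2) (K - i + 1)) * D i)
        / (1 - ((K - r + 1 : ℕ) : ℝ) * g (K - r + 1) (K - r + 1))) :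
    (∑ r ∈ Finset.Icc 1 (K - 1), D r
      = (1 + p) / (1 - p)
        + ∑ r ∈ Finset.Icc 1 (K - 2),
            (1 - p) * p ^ (K - r)
              / (((K - r : ℕ) : ℝ) * p ^ (K - r + 1)
                  - ((K - r + 1 : ℕ) : ℝ) * p ^ (K - r) + 1))
    ↔ ∀ k ∈ Finset.Icc 2 K, ∀ j ∈ Finset.Icc 1 k,
        g j k = (1 - p) * p ^ (j - 1) / (1 - p ^ k) := by
  have hp1' : (0:ℝ) < 1 - p := by linarith
  have hpk : ∀ k : ℕ, 1 ≤ k → 0 < 1 - p ^ k := by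
    intro k hk
    have : p ^ k < 1 := pow_lt_one₀ hp0.le hp1 (by omega)
    linarith
  set dl : ℕ → ℝ := fun s => 1 - ((s:ℝ)+1) * p^s + (s:ℝ) * p^(s+1) with hdl
  set c : ℕ → ℕ → ℝ :=
    fun m k => (∑ j ∈ Finset.Icc 1 (m-1), g j k) - ((m:ℝ)-1) * g m k with hcdef
  set E : ℕ → ℝ := fun k => D (K - k + 1) with hEdef
  set U : ℕ → ℝ := fun m => ∑ k ∈ Finset.Icc m K, E k / (1 - p^k) with hUdef
  have hdlpos : ∀ s : ℕ, 1 ≤ s → 0 < dl s := fun s hs => dl_pos p hp0 hp1 s hs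
  -- chain inequality within a row
  have chain : ∀ k ∈ Finset.Icc 2 K, ∀ i j : ℕ, 1 ≤ i → i ≤ j → j ≤ k →
      g j k ≤ p ^ (j - i) * g i k := by
    have key : ∀ k ∈ Finset.Icc 2 K, ∀ i : ℕ, 1 ≤ i → ∀ d : ℕ, i + d ≤ k →
        g (i + d) k ≤ p ^ d * g i k := by
      intro k hk i hi d
      induction d with
      | zero => intro _; simp
      | succ d ih =>
        intro hdk
        have h1 : g (i + d) k ≤ p ^ d * g i k := ih (by omega)
        have h2 : g (i + d + 1) k ≤ p * g (i + d) k := by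
          apply hsep k hk (i + d)
          simp only [Finset.mem_Icc]; omega
        calc g (i + (d+1)) k = g (i + d + 1) k := by ring_nf
          _ ≤ p * g (i + d) k := h2
          _ ≤ p * (p ^ d * g i k) := by nlinarith
          _ = p ^ (d+1) * g i k := by ring
    intro k hk i j hi hij hjk
    have := key k hk i hi (j - i) (by omega)
    rwa [show i + (j - i) = j from by omega] at this
  -- per-row inequality
  have rowineq : ∀ k ∈ Finset.Icc 2 K, ∀ m : ℕ, 2 ≤ m → m ≤ k →
      dl (m-1) ≤ (1 - p^k) * c m k := by
    intro k hk m h2 hmk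
    simp only [hdl, hcdef]
    set t := g m k with ht
    set H := ∑ j ∈ Finset.Icc 1 (m-1), g j k with hH
    set G := ∑ j ∈ Finset.Icc m k, g j k with hG
    have hHG : H + G = 1 := by
      have hsplit : Finset.Icc 1 k = Finset.Icc 1 (m-1) ∪ Finset.Icc m k := by
        ext x; simp only [Finset.mem_Icc, Finset.mem_union]; omega
      have hdisj : Disjoint (Finset.Icc 1 (m-1)) (Finset.Icc m k) := by
        simp only [Finset.disjoint_left, Finset.mem_Icc]
        intro x hx hx'; omega
      rw [hH, hG, ← Finset.sum_union hdisj, ← hsplit, hsum k hk]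
    have ecast : ((m-1 : ℕ):ℝ) = (m:ℝ) - 1 := by
      rw [Nat.cast_sub (by omega : 1 ≤ m)]; simp
    have hgm1 : (1:ℝ) - p^(m-1) = (1-p) * ∑ j ∈ Finset.Icc 1 (m-1), p^(j-1) := by
      have := geom_Icc p 1 (m-1)
      rw [show m-1+1-1 = m-1 from by omega] at this
      exact this.symm
    have hX : 0 ≤ (1-p)*p^(m-1)*H - t*(1-p^(m-1)) := by
      have hsplit : ∑ j ∈ Finset.Icc 1 (m-1), (p^(m-1)*g j k - p^(j-1)*t)
          = p^(m-1)*H - (∑ j ∈ Finset.Icc 1 (m-1), p^(j-1))*t := by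
        rw [Finset.sum_sub_distrib, ← Finset.mul_sum, ← Finset.sum_mul, hH]
      have heq : (1-p)*p^(m-1)*H - t*(1-p^(m-1))
          = (1-p) * ∑ j ∈ Finset.Icc 1 (m-1), (p^(m-1)*g j k - p^(j-1)*t) := by
        rw [hsplit, hgm1]; ring
      rw [heq]
      apply mul_nonneg hp1'.le
      apply Finset.sum_nonneg
      intro j hj
      simp only [Finset.mem_Icc] at hj
      have hc : g m k ≤ p ^ (m-j) * g j k := chain k hk j m (by omega) (by omega) hmk
      have h1 : p^(j-1) * g m k ≤ p^(j-1) * (p^(m-j) * g j k) :=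
        mul_le_mul_of_nonneg_left hc (pow_nonneg hp0.le _)
      have h2' : p^(j-1) * p^(m-j) = p^(m-1) := by
        rw [← pow_add]; congr 1; omega
      have h3 : p^(j-1) * t ≤ p^(m-1) * g j k := by
        rw [ht]
        calc p^(j-1) * g m k ≤ p^(j-1) * (p^(m-j) * g j k) := h1
          _ = (p^(j-1) * p^(m-j)) * g j k := by ring
          _ = p^(m-1) * g j k := by rw [h2']
      linarith
    have hgm2 : (1:ℝ) - p^(k+1-m) = (1-p) * ∑ j ∈ Finset.Icc m k, p^(j-m) :=
      (geom_Icc p m k).symm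
    have hY : 0 ≤ t*(1-p^(k+1-m)) - (1-p)*G := by
      have hsplit : ∑ j ∈ Finset.Icc m k, (p^(j-m)*t - g j k)
          = (∑ j ∈ Finset.Icc m k, p^(j-m))*t - G := by
        rw [Finset.sum_sub_distrib, ← Finset.sum_mul, hG]
      have heq : t*(1-p^(k+1-m)) - (1-p)*G
          = (1-p) * ∑ j ∈ Finset.Icc m k, (p^(j-m)*t - g j k) := by
        rw [hsplit, hgm2]; ring
      rw [heq]
      apply mul_nonneg hp1'.le
      apply Finset.sum_nonneg
      intro j hj
      simp only [Finset.mem_Icc] at hj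
      have hc : g j k ≤ p ^ (j-m) * g m k := chain k hk m j (by omega) (by omega) (by omega)
      rw [ht]; linarith
    have e1 : p^k = p^(m-1) * p^(k+1-m) := by rw [← pow_add]; congr 1; omega
    have e2 : p^(m-1+1) = p^(m-1) * p := pow_succ p (m-1)
    have hiden : (1-p) * ((1-p^k) * (H - ((m:ℝ)-1)*t)
          - (1 - (((m-1:ℕ):ℝ)+1) * p^(m-1) + ((m-1:ℕ):ℝ) * p^(m-1+1)))
        = ((1 - p^(k+1-m)) + ((m:ℝ)-1)*(1-p)) * ((1-p)*p^(m-1)*H - t*(1-p^(m-1)))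
          + (1 - (((m-1:ℕ):ℝ)+1) * p^(m-1) + ((m-1:ℕ):ℝ) * p^(m-1+1))
            * (t*(1-p^(k+1-m)) - (1-p)*(1 - H)) := by
      rw [e1, e2, ecast]; ring
    have hY' : 0 ≤ t*(1-p^(k+1-m)) - (1-p)*(1-H) := by
      have : G = 1 - H := by linarith
      rw [← this]; exact hY
    have hmu : (0:ℝ) ≤ (1 - p^(k+1-m)) + ((m:ℝ)-1)*(1-p) := by
      have hb : p^(k+1-m) ≤ 1 := pow_le_one₀ hp0.le hp1.le
      have hm1 : (1:ℝ) ≤ (m:ℝ) := by exact_mod_cast Nat.one_le_cast.mpr (by omega)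
      nlinarith
    have hnu : (0:ℝ) ≤ 1 - (((m-1:ℕ):ℝ)+1) * p^(m-1) + ((m-1:ℕ):ℝ) * p^(m-1+1) := by
      have := hdlpos (m-1) (by omega)
      simp only [hdl] at this
      linarith
    have hrhs : 0 ≤ ((1 - p^(k+1-m)) + ((m:ℝ)-1)*(1-p)) * ((1-p)*p^(m-1)*H - t*(1-p^(m-1)))
          + (1 - (((m-1:ℕ):ℝ)+1) * p^(m-1) + ((m-1:ℕ):ℝ) * p^(m-1+1))
            * (t*(1-p^(k+1-m)) - (1-p)*(1 - H)) :=
      add_nonneg (mul_nonneg hmu hX) (mul_nonneg hnu hY')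
    rw [← hiden] at hrhs
    nlinarith [hrhs, hp1']
  -- equality case, m = 2
  have hroweq : ∀ k ∈ Finset.Icc 2 K, (1 - p^k) * c 2 k = dl 1 →
      ∀ j ∈ Finset.Icc 1 k, g j k = (1-p) * p^(j-1) / (1 - p^k) := by
    intro k hk heqq j hj
    simp only [Finset.mem_Icc] at hj
    simp only [hdl, hcdef] at heqq
    have hIcc11 : Finset.Icc 1 (2-1) = {1} := by norm_num
    rw [hIcc11, Finset.sum_singleton] at heqq
    norm_num at heqq
    set t := g 2 k with ht
    set H := g 1 k with hH
    set G := ∑ j ∈ Finset.Icc 2 k, g j k with hG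
    have hHG : H + G = 1 := by
      have hsplit : Finset.Icc 1 k = {1} ∪ Finset.Icc 2 k := by
        ext x; simp only [Finset.mem_Icc, Finset.mem_union, Finset.mem_singleton]; omega
      have hdisj : Disjoint ({1} : Finset ℕ) (Finset.Icc 2 k) := by
        simp only [Finset.disjoint_left, Finset.mem_Icc, Finset.mem_singleton]
        intro x hx hx'; omega
      have := hsum k hk
      rw [hsplit, Finset.sum_union hdisj, Finset.sum_singleton] at this
      exact this
    have hX : 0 ≤ (1-p) * (p * H - t) := by
      apply mul_nonneg hp1'.le
      have hk2K : 2 ≤ k ∧ k ≤ K := by simpa [Finset.mem_Icc] using hk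
      have := hsep k hk 1 (by simp only [Finset.mem_Icc]; omega)
      simp only [ht, hH]; linarith
    have hgm2 : (1:ℝ) - p^(k-1) = (1-p) * ∑ j ∈ Finset.Icc 2 k, p^(j-2) := by
      have := geom_Icc p 2 k
      rw [show k+1-2 = k-1 from by omega] at this
      exact this.symm
    have hYsum : ∀ j ∈ Finset.Icc 2 k, 0 ≤ p^(j-2)*t - g j k := by
      intro j hj'
      simp only [Finset.mem_Icc] at hj'
      have hc : g j k ≤ p ^ (j-2) * g 2 k := chain k hk 2 j (by omega) (by omega) (by omega)
      rw [ht]; linarith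
    have hYeq : t*(1-p^(k-1)) - (1-p)*G
        = (1-p) * ∑ j ∈ Finset.Icc 2 k, (p^(j-2)*t - g j k) := by
      have hsplit : ∑ j ∈ Finset.Icc 2 k, (p^(j-2)*t - g j k)
          = (∑ j ∈ Finset.Icc 2 k, p^(j-2))*t - G := by
        rw [Finset.sum_sub_distrib, ← Finset.sum_mul, hG]
      rw [hsplit, hgm2]; ring
    have hY : 0 ≤ t*(1-p^(k-1)) - (1-p)*G := by
      rw [hYeq]
      exact mul_nonneg hp1'.le (Finset.sum_nonneg hYsum)
    have hY' : 0 ≤ t*(1-p^(k-1)) - (1-p)*(1-H) := by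
      have : G = 1 - H := by linarith
      linarith [hY, this ▸ hY]
    have e1 : p^k = p^(1:ℕ) * p^(k-1) := by rw [← pow_add]; congr 1; omega
    have hiden : (1-p) * ((1-p^k) * (H - t) - (1 - 2*p + p^2))
        = ((1 - p^(k-1)) + (1-p)) * ((1-p)*(p*H - t))
          + (1 - 2*p + p^2) * (t*(1-p^(k-1)) - (1-p)*(1 - H)) := by
      rw [e1]; ring
    have heqq' : (1-p^k) * (H - t) = 1 - 2*p + p^2 := by
      rw [hH, ht]; rw [hH, ht] at heqq; push_cast at heqq ⊢; linarith [heqq]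
    have hmu : (0:ℝ) < (1 - p^(k-1)) + (1-p) := by
      have hb : p^(k-1) ≤ 1 := pow_le_one₀ hp0.le hp1.le
      linarith
    have hnu : (0:ℝ) < 1 - 2*p + p^2 := by nlinarith
    have hzero : ((1 - p^(k-1)) + (1-p)) * ((1-p)*(p*H - t))
        + (1 - 2*p + p^2) * (t*(1-p^(k-1)) - (1-p)*(1 - H)) = 0 := by
      rw [← hiden, heqq']; ring
    have hprod1 : ((1 - p^(k-1)) + (1-p)) * ((1-p)*(p*H - t)) = 0 := by
      have hA := mul_nonneg hmu.le hX
      have hB := mul_nonneg hnu.le hY'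
      linarith [hzero]
    have hprod2 : (1 - 2*p + p^2) * (t*(1-p^(k-1)) - (1-p)*(1 - H)) = 0 := by
      have hA := mul_nonneg hmu.le hX
      have hB := mul_nonneg hnu.le hY'
      linarith [hzero]
    have hX0 : t = p * H := by
      rcases mul_eq_zero.mp hprod1 with h | h
      · exact absurd h hmu.ne'
      · rcases mul_eq_zero.mp h with h' | h'
        · exact absurd h' (by linarith)
        · linarith
    have hY0 : t*(1-p^(k-1)) - (1-p)*G = 0 := by
      rcases mul_eq_zero.mp hprod2 with h | h
      · exact absurd h hnu.ne'
      · have hGH : G = 1 - H := by linarith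
        rw [hGH]; exact h
    have hsum0 : ∑ j ∈ Finset.Icc 2 k, (p^(j-2)*t - g j k) = 0 := by
      have := hYeq.symm.trans hY0
      rcases mul_eq_zero.mp this with h | h
      · exact absurd h (by linarith)
      · exact h
    have hterm : ∀ i ∈ Finset.Icc 2 k, p^(i-2)*t - g i k = 0 :=
      (Finset.sum_eq_zero_iff_of_nonneg hYsum).mp hsum0
    have hgj : ∀ i : ℕ, 1 ≤ i → i ≤ k → g i k = p^(i-1) * H := by
      intro i h1 h2
      rcases Nat.eq_or_lt_of_le h1 with h | h
      · rw [← h]; simp [hH]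
      · have hi2 : 2 ≤ i := h
        have := hterm i (by simp only [Finset.mem_Icc]; omega)
        have : g i k = p^(i-2) * t := by linarith
        rw [this, hX0, ← mul_assoc, ← pow_succ]
        congr 2
        omega
    have hkne : (1:ℝ) - p^k ≠ 0 := by
      have hk2K : 2 ≤ k ∧ k ≤ K := by simpa [Finset.mem_Icc] using hk
      exact (hpk k (by omega)).ne'
    have hHval : H * (1 - p^k) = 1 - p := by
      have hs := hsum k hk
      have hs2 : ∑ j ∈ Finset.Icc 1 k, g j k = (∑ j ∈ Finset.Icc 1 k, p^(j-1)) * H := by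
        rw [Finset.sum_mul]
        apply Finset.sum_congr rfl
        intro i hi
        simp only [Finset.mem_Icc] at hi
        exact hgj i hi.1 hi.2
      have hg := geom_Icc p 1 k
      rw [show k+1-1 = k from by omega] at hg
      have : (∑ j ∈ Finset.Icc 1 k, p^(j-1)) * H = 1 := by rw [← hs2, hs]
      linear_combination (-H) * hg + (1-p) * this
    rw [eq_div_iff hkne, hgj j hj.1 hj.2]
    linear_combination p^(j-1) * hHval
  -- geometric rows give equality
  have hgeo : (∀ k ∈ Finset.Icc 2 K, ∀ j ∈ Finset.Icc 1 k,
        g j k = (1-p) * p^(j-1) / (1 - p^k)) →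
      ∀ m k : ℕ, 2 ≤ m → m ≤ k → k ≤ K → (1 - p^k) * c m k = dl (m-1) := by
    intro hgall m k h2 hmk hkK
    have hkmem : k ∈ Finset.Icc 2 K := by simp only [Finset.mem_Icc]; omega
    have hkne : (1:ℝ) - p^k ≠ 0 := (hpk k (by omega)).ne'
    have h1 : (1-p^k) * (∑ j ∈ Finset.Icc 1 (m-1), g j k) = 1 - p^(m-1) := by
      rw [Finset.mul_sum]
      have hcongr : ∀ j ∈ Finset.Icc 1 (m-1), (1-p^k) * g j k = (1-p)*p^(j-1) := by
        intro j hj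
        simp only [Finset.mem_Icc] at hj
        rw [hgall k hkmem j (by simp only [Finset.mem_Icc]; omega)]
        field_simp
      rw [Finset.sum_congr rfl hcongr]
      have hg := geom_Icc p 1 (m-1)
      rw [show m-1+1-1 = m-1 from by omega] at hg
      rw [← hg, Finset.mul_sum]
    have h2' : (1-p^k) * g m k = (1-p)*p^(m-1) := by
      rw [hgall k hkmem m (by simp only [Finset.mem_Icc]; omega)]
      field_simp
    simp only [hdl, hcdef]
    have ecast : ((m-1 : ℕ):ℝ) = (m:ℝ) - 1 := by
      rw [Nat.cast_sub (by omega : 1 ≤ m)]; simp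
    rw [ecast, pow_succ]
    linear_combination h1 - ((m:ℝ)-1) * h2'
  -- diagonal value of c
  have cdiag : ∀ m ∈ Finset.Icc 2 K, c m m = 1 - (m:ℝ) * g m m := by
    intro m hm
    have hm2K : 2 ≤ m ∧ m ≤ K := by simpa [Finset.mem_Icc] using hm
    have hsplit : Finset.Icc 1 m = insert m (Finset.Icc 1 (m-1)) := by
      ext x; simp only [Finset.mem_Icc, Finset.mem_insert]; omega
    have hnotin : m ∉ Finset.Icc 1 (m-1) := by
      simp only [Finset.mem_Icc]; omega
    have hs := hsum m hm
    rw [hsplit, Finset.sum_insert hnotin] at hs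
    simp only [hcdef]
    have ecast : ((m-1 : ℕ):ℝ) = (m:ℝ) - 1 := by
      rw [Nat.cast_sub (by omega : 1 ≤ m)]; simp
    linarith [hs]
  have hdenom : ∀ m ∈ Finset.Icc 2 K, 0 < 1 - (m:ℝ) * g m m := by
    intro m hm
    have hm2K : 2 ≤ m ∧ m ≤ K := by simpa [Finset.mem_Icc] using hm
    have h1 := rowineq m hm m (by omega) le_rfl
    have h2 := hdlpos (m-1) (by omega)
    have h3 : 0 < (1 - p^m) * c m m := lt_of_lt_of_le h2 h1
    have h4 : 0 < 1 - p^m := hpk m (by omega)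
    have h5 : 0 < c m m := by
      rcases mul_pos_iff.mp h3 with ⟨_, h⟩ | ⟨h, _⟩
      · exact h
      · linarith
    rw [← cdiag m hm]; exact h5
  -- base identity
  have hbase : E K * (1 - (K:ℝ) * g K K) = 1 := by
    have hEK : E K = D 1 := by
      simp only [hEdef]
      congr 1
      omega
    have hne : (1 - (K:ℝ) * g K K) ≠ 0 :=
      (hdenom K (by simp only [Finset.mem_Icc]; omega)).ne'
    rw [hEK, hD1, one_div, inv_mul_cancel₀ hne]
  -- recursion, reindexed
  have hrec : ∀ m : ℕ, 2 ≤ m → m ≤ K - 1 →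
      E m * (1 - (m:ℝ) * g m m)
        = (m:ℝ) * ∑ k ∈ Finset.Icc (m+1) K, (g m k - g (m+1) k) * E k := by
    intro m h2 hm1
    have hr : K - m + 1 ∈ Finset.Icc 2 (K-1) := by simp only [Finset.mem_Icc]; omega
    have hd := hDr (K-m+1) hr
    rw [show K - (K-m+1) + 1 = m from by omega, show K - (K-m+1) + 2 = m+1 from by omega,
      show (K-m+1) - 1 = K-m from by omega] at hd
    have hre : ∑ i ∈ Finset.Icc 1 (K-m), (g m (K-i+1) - g (m+1) (K-i+1)) * D i
        = ∑ k ∈ Finset.Icc (m+1) K, (g m k - g (m+1) k) * E k := by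
      refine Finset.sum_nbij' (fun i => K - i + 1) (fun k => K - k + 1) ?_ ?_ ?_ ?_ ?_
      · intro a ha; simp only [Finset.mem_Icc] at *; omega
      · intro a ha; simp only [Finset.mem_Icc] at *; omega
      · intro a ha; simp only [Finset.mem_Icc] at ha
        show K - (K - a + 1) + 1 = a; omega
      · intro a ha; simp only [Finset.mem_Icc] at ha
        show K - (K - a + 1) + 1 = a; omega
      · intro a ha
        simp only [Finset.mem_Icc] at ha
        have hEa : E (K - a + 1) = D a := by
          simp only [hEdef]
          congr 1
          omega
        rw [hEa]
    rw [hre] at hd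
    have hne : (1 - (m:ℝ) * g m m) ≠ 0 :=
      (hdenom m (by simp only [Finset.mem_Icc]; omega)).ne'
    have hEm : E m = D (K - m + 1) := by simp only [hEdef]
    rw [hEm, hd, div_mul_cancel₀ _ hne]
  -- positivity of E
  have hEpos : ∀ m : ℕ, 2 ≤ m → m ≤ K → 0 < E m := by
    have key : ∀ j : ℕ, ∀ m : ℕ, 2 ≤ m → m ≤ K → K - m ≤ j → 0 < E m := by
      intro j
      induction j with
      | zero =>
        intro m h2 hmK h0
        have hmK' : m = K := by omega
        subst hmK'
        have hd := hdenom m (by simp only [Finset.mem_Icc]; omega)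
        by_contra hcon
        push_neg at hcon
        have : E m * (1 - (m:ℝ) * g m m) ≤ 0 :=
          mul_nonpos_iff.mpr (Or.inr ⟨hcon, hd.le⟩)
        linarith [hbase]
      | succ j ih =>
        intro m h2 hmK hj
        rcases Nat.eq_or_lt_of_le hmK with hEq | hLt
        · subst hEq
          have hd := hdenom m (by simp only [Finset.mem_Icc]; omega)
          by_contra hcon
          push_neg at hcon
          have : E m * (1 - (m:ℝ) * g m m) ≤ 0 :=
            mul_nonpos_iff.mpr (Or.inr ⟨hcon, hd.le⟩)
          linarith [hbase]
        · have hm1 : m ≤ K - 1 := by omega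
          have hr := hrec m h2 hm1
          have hd := hdenom m (by simp only [Finset.mem_Icc]; omega)
          have hsumpos : 0 < ∑ k ∈ Finset.Icc (m+1) K, (g m k - g (m+1) k) * E k := by
            apply Finset.sum_pos
            · intro k hkm
              simp only [Finset.mem_Icc] at hkm
              have hkmem : k ∈ Finset.Icc 2 K := by simp only [Finset.mem_Icc]; omega
              have hg1 : 0 < g m k := hpos k hkmem m (by simp only [Finset.mem_Icc]; omega)
              have hg2 : g (m+1) k ≤ p * g m k :=
                hsep k hkmem m (by simp only [Finset.mem_Icc]; omega)
              have hlt : g (m+1) k < g m k := by nlinarith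
              have hEk : 0 < E k := ih k (by omega) (by omega) (by omega)
              exact mul_pos (by linarith) hEk
            · exact ⟨m+1, by simp only [Finset.mem_Icc]; omega⟩
          have hnum : 0 < (m:ℝ) * ∑ k ∈ Finset.Icc (m+1) K, (g m k - g (m+1) k) * E k :=
            mul_pos (by exact_mod_cast (by omega : 0 < m)) hsumpos
          by_contra hcon
          push_neg at hcon
          have : E m * (1 - (m:ℝ) * g m m) ≤ 0 :=
            mul_nonpos_iff.mpr (Or.inr ⟨hcon, hd.le⟩)
          linarith [hr]
    intro m h2 hmK
    exact key (K-m) m h2 hmK le_rfl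
  -- the star identity
  have hstar : ∀ m : ℕ, 2 ≤ m → m ≤ K → ∑ k ∈ Finset.Icc m K, E k * c m k = 1 := by
    have key : ∀ j : ℕ, ∀ m : ℕ, 2 ≤ m → m ≤ K → K - m ≤ j →
        ∑ k ∈ Finset.Icc m K, E k * c m k = 1 := by
      intro j
      induction j with
      | zero =>
        intro m h2 hmK h0
        have hmK' : m = K := by omega
        subst hmK'
        rw [Finset.Icc_self, Finset.sum_singleton,
          cdiag m (by simp only [Finset.mem_Icc]; omega)]
        exact hbase
      | succ j ih =>
        intro m h2 hmK hj
        rcases Nat.eq_or_lt_of_le hmK with hEq | hLt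
        · subst hEq
          rw [Finset.Icc_self, Finset.sum_singleton,
            cdiag m (by simp only [Finset.mem_Icc]; omega)]
          exact hbase
        · have hsplit : Finset.Icc m K = insert m (Finset.Icc (m+1) K) := by
            ext x; simp only [Finset.mem_Icc, Finset.mem_insert]; omega
          have hnotin : m ∉ Finset.Icc (m+1) K := by simp only [Finset.mem_Icc]; omega
          rw [hsplit, Finset.sum_insert hnotin]
          have hstep : ∀ k : ℕ, c m k = c (m+1) k - (m:ℝ) * (g m k - g (m+1) k) := by
            intro k
            simp only [hcdef]
            have hsplit2 : Finset.Icc 1 ((m+1)-1) = insert m (Finset.Icc 1 (m-1)) := by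
              ext x; simp only [Finset.mem_Icc, Finset.mem_insert]; omega
            rw [hsplit2, Finset.sum_insert (by simp only [Finset.mem_Icc]; omega)]
            push_cast
            ring
          have hsum2 : ∑ k ∈ Finset.Icc (m+1) K, E k * c m k
              = (∑ k ∈ Finset.Icc (m+1) K, E k * c (m+1) k)
                - (m:ℝ) * ∑ k ∈ Finset.Icc (m+1) K, (g m k - g (m+1) k) * E k := by
            rw [Finset.mul_sum, ← Finset.sum_sub_distrib]
            apply Finset.sum_congr rfl
            intro k hk
            rw [hstep k]; ring
          rw [hsum2, cdiag m (by simp only [Finset.mem_Icc]; omega),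
            ih (m+1) (by omega) (by omega) (by omega)]
          have hr := hrec m h2 (by omega)
          linarith [hr]
    intro m h2 hmK
    exact key (K-m) m h2 hmK le_rfl
  -- upper bound on U
  have hUmul : ∀ m : ℕ, 2 ≤ m → m ≤ K →
      dl (m-1) * U m = ∑ k ∈ Finset.Icc m K, E k * (dl (m-1) / (1 - p^k)) := by
    intro m h2 hmK
    simp only [hUdef]
    rw [Finset.mul_sum]
    apply Finset.sum_congr rfl
    intro k hk
    ring
  have hUle : ∀ m : ℕ, 2 ≤ m → m ≤ K → dl (m-1) * U m ≤ 1 := by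
    intro m h2 hmK
    rw [hUmul m h2 hmK]
    calc ∑ k ∈ Finset.Icc m K, E k * (dl (m-1) / (1 - p^k))
        ≤ ∑ k ∈ Finset.Icc m K, E k * c m k := by
          apply Finset.sum_le_sum
          intro k hk
          simp only [Finset.mem_Icc] at hk
          have hE := (hEpos k (by omega) (by omega)).le
          apply mul_le_mul_of_nonneg_left _ hE
          rw [div_le_iff₀ (hpk k (by omega))]
          have := rowineq k (by simp only [Finset.mem_Icc]; omega) m h2 (by omega)
          linarith [this]
      _ = 1 := hstar m h2 hmK
  -- Abel resummation
  have hV : ∀ m : ℕ, 2 ≤ m → m ≤ K →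
      ∑ l ∈ Finset.Icc m K, (1-p) * p^(l-1) * U l
        = ∑ k ∈ Finset.Icc m K, E k * ((p^(m-1) - p^k) / (1 - p^k)) := by
    have key : ∀ j : ℕ, ∀ m : ℕ, 2 ≤ m → m ≤ K → K - m ≤ j →
        ∑ l ∈ Finset.Icc m K, (1-p) * p^(l-1) * U l
          = ∑ k ∈ Finset.Icc m K, E k * ((p^(m-1) - p^k) / (1 - p^k)) := by
      intro j
      induction j with
      | zero =>
        intro m h2 hmK h0
        have hmK' : m = K := by omega
        subst hmK'
        have hpm : p^m = p^(m-1) * p := by rw [← pow_succ]; congr 1; omega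
        rw [Finset.Icc_self, Finset.sum_singleton, Finset.sum_singleton]
        simp only [hUdef]
        rw [Finset.Icc_self, Finset.sum_singleton, hpm]
        ring
      | succ j ih =>
        intro m h2 hmK hj
        rcases Nat.eq_or_lt_of_le hmK with hEq | hLt
        · subst hEq
          have hpm : p^m = p^(m-1) * p := by rw [← pow_succ]; congr 1; omega
          rw [Finset.Icc_self, Finset.sum_singleton, Finset.sum_singleton]
          simp only [hUdef]
          rw [Finset.Icc_self, Finset.sum_singleton, hpm]
          ring
        · have hsplit : Finset.Icc m K = insert m (Finset.Icc (m+1) K) := by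
            ext x; simp only [Finset.mem_Icc, Finset.mem_insert]; omega
          have hnotin : m ∉ Finset.Icc (m+1) K := by simp only [Finset.mem_Icc]; omega
          have hpm : p^m = p^(m-1) * p := by rw [← pow_succ]; congr 1; omega
          have hUm : U m = E m / (1-p^m) + ∑ k ∈ Finset.Icc (m+1) K, E k / (1-p^k) := by
            simp only [hUdef]
            rw [hsplit, Finset.sum_insert hnotin]
          have hih := ih (m+1) (by omega) (by omega) (by omega)
          rw [show (m+1)-1 = m from by omega] at hih
          rw [hsplit, Finset.sum_insert hnotin, Finset.sum_insert hnotin, hih, hUm,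
            mul_add]
          have hc1 : (1-p)*p^(m-1) * (E m/(1-p^m)) = E m * ((p^(m-1)-p^m)/(1-p^m)) := by
            rw [hpm]; ring
          have hcomb : (1-p)*p^(m-1) * (∑ k ∈ Finset.Icc (m+1) K, E k/(1-p^k))
              + ∑ k ∈ Finset.Icc (m+1) K, E k * ((p^m - p^k)/(1-p^k))
              = ∑ k ∈ Finset.Icc (m+1) K, E k * ((p^(m-1) - p^k)/(1-p^k)) := by
            rw [Finset.mul_sum, ← Finset.sum_add_distrib]
            apply Finset.sum_congr rfl
            intro k hk
            rw [hpm]; ring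
          linarith [hc1, hcomb]
    intro m h2 hmK
    exact key (K-m) m h2 hmK le_rfl
  have hAbel : ∑ k ∈ Finset.Icc 2 K, E k
      = (1-p^2) * U 2 + ∑ l ∈ Finset.Icc 3 K, (1-p) * p^(l-1) * U l := by
    have hp2 : (0:ℝ) < 1 - p^2 := hpk 2 (by omega)
    rcases Nat.eq_or_lt_of_le hK with hK2 | hK3
    · subst hK2
      have h32 : Finset.Icc 3 2 = (∅ : Finset ℕ) := by decide
      rw [h32, Finset.sum_empty, Finset.Icc_self, Finset.sum_singleton]
      simp only [hUdef]
      rw [Finset.Icc_self, Finset.sum_singleton]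
      field_simp
      ring
    · have h3 := hV 3 (by omega) (by omega)
      rw [show (3:ℕ)-1 = 2 from rfl] at h3
      rw [h3]
      have hsplit : Finset.Icc 2 K = insert 2 (Finset.Icc 3 K) := by
        ext x; simp only [Finset.mem_Icc, Finset.mem_insert]; omega
      have hnotin : (2:ℕ) ∉ Finset.Icc 3 K := by simp only [Finset.mem_Icc]; omega
      have hU2 : U 2 = E 2 / (1-p^2) + ∑ k ∈ Finset.Icc 3 K, E k / (1-p^k) := by
        simp only [hUdef]
        rw [hsplit, Finset.sum_insert hnotin]
      rw [hsplit, Finset.sum_insert hnotin, hU2, mul_add]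
      have hc1 : (1-p^2) * (E 2/(1-p^2)) = E 2 := by field_simp
      have hcomb : (1-p^2) * (∑ k ∈ Finset.Icc 3 K, E k/(1-p^k))
          + ∑ k ∈ Finset.Icc 3 K, E k * ((p^2 - p^k)/(1-p^k))
          = ∑ k ∈ Finset.Icc 3 K, E k := by
        rw [Finset.mul_sum, ← Finset.sum_add_distrib]
        apply Finset.sum_congr rfl
        intro k hk
        simp only [Finset.mem_Icc] at hk
        have hne := (hpk k (by omega)).ne'
        field_simp
        ring
      linarith [hc1, hcomb]
  -- LHS reindex
  have hLHS : ∑ r ∈ Finset.Icc 1 (K-1), D r = ∑ k ∈ Finset.Icc 2 K, E k := by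
    refine Finset.sum_nbij' (fun r => K - r + 1) (fun k => K - k + 1) ?_ ?_ ?_ ?_ ?_
    · intro a ha; simp only [Finset.mem_Icc] at *; omega
    · intro a ha; simp only [Finset.mem_Icc] at *; omega
    · intro a ha; simp only [Finset.mem_Icc] at ha
      show K - (K - a + 1) + 1 = a; omega
    · intro a ha; simp only [Finset.mem_Icc] at ha
      show K - (K - a + 1) + 1 = a; omega
    · intro a ha; simp only [Finset.mem_Icc] at ha
      show D a = E (K - a + 1)
      simp only [hEdef]
      congr 1
      omega
  -- target reindex
  have hT : (1 + p) / (1 - p)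
        + (∑ r ∈ Finset.Icc 1 (K - 2),
            (1 - p) * p ^ (K - r)
              / (((K - r : ℕ) : ℝ) * p ^ (K - r + 1)
                  - ((K - r + 1 : ℕ) : ℝ) * p ^ (K - r) + 1))
      = (1-p^2) * (1 / dl 1) + ∑ l ∈ Finset.Icc 3 K, (1-p) * p^(l-1) * (1 / dl (l-1)) := by
    have hpart1 : (1 + p) / (1 - p) = (1-p^2) * (1 / dl 1) := by
      have h1 : dl 1 = (1-p)^2 := by simp only [hdl]; push_cast; ring
      rw [h1, mul_one_div, div_eq_div_iff hp1'.ne' (pow_ne_zero 2 hp1'.ne')]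
      ring
    have hpart2 : ∑ r ∈ Finset.Icc 1 (K - 2),
            (1 - p) * p ^ (K - r)
              / (((K - r : ℕ) : ℝ) * p ^ (K - r + 1)
                  - ((K - r + 1 : ℕ) : ℝ) * p ^ (K - r) + 1)
        = ∑ l ∈ Finset.Icc 3 K, (1-p) * p^(l-1) * (1 / dl (l-1)) := by
      refine Finset.sum_nbij' (fun r => K - r + 1) (fun l => K - l + 1) ?_ ?_ ?_ ?_ ?_
      · intro a ha; simp only [Finset.mem_Icc] at *; omega
      · intro a ha; simp only [Finset.mem_Icc] at *; omega
      · intro a ha; simp only [Finset.mem_Icc] at ha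
        show K - (K - a + 1) + 1 = a; omega
      · intro a ha; simp only [Finset.mem_Icc] at ha
        show K - (K - a + 1) + 1 = a; omega
      · intro a ha; simp only [Finset.mem_Icc] at ha
        show (1 - p) * p ^ (K - a)
              / (((K - a : ℕ) : ℝ) * p ^ (K - a + 1)
                  - ((K - a + 1 : ℕ) : ℝ) * p ^ (K - a) + 1)
            = (1-p) * p^((K - a + 1)-1) * (1 / dl ((K - a + 1)-1))
        rw [show (K - a + 1) - 1 = K - a from by omega]
        simp only [hdl]
        rw [mul_one_div, div_eq_div_iff]
        · push_cast
          ring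
        · push_cast
          have := hdlpos (K - a) (by omega)
          simp only [hdl] at this
          push_cast at this
          linarith
        · have := hdlpos (K - a) (by omega)
          simp only [hdl] at this
          linarith
    rw [hpart1, hpart2]
  -- key difference identity
  have hsplitsum : ∑ l ∈ Finset.Icc 3 K, (1-p) * p^(l-1) * (1 / dl (l-1) - U l)
      = (∑ l ∈ Finset.Icc 3 K, (1-p) * p^(l-1) * (1 / dl (l-1)))
        - ∑ l ∈ Finset.Icc 3 K, (1-p) * p^(l-1) * U l := by
    rw [← Finset.sum_sub_distrib]
    apply Finset.sum_congr rfl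
    intro l hl
    ring
  have hkey : ((1 + p) / (1 - p)
        + ∑ r ∈ Finset.Icc 1 (K - 2),
            (1 - p) * p ^ (K - r)
              / (((K - r : ℕ) : ℝ) * p ^ (K - r + 1)
                  - ((K - r + 1 : ℕ) : ℝ) * p ^ (K - r) + 1))
        - ∑ r ∈ Finset.Icc 1 (K-1), D r
      = (1-p^2) * (1 / dl 1 - U 2)
        + ∑ l ∈ Finset.Icc 3 K, (1-p) * p^(l-1) * (1 / dl (l-1) - U l) := by
    rw [hT, hLHS, hAbel, hsplitsum]
    ring
  have hdl1pos : 0 < dl 1 := hdlpos 1 le_rfl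
  have hslack : ∀ m : ℕ, 2 ≤ m → m ≤ K → 0 ≤ 1 / dl (m-1) - U m := by
    intro m h2 hmK
    have h1 := hUle m h2 hmK
    have h2' := hdlpos (m-1) (by omega)
    rw [le_sub_iff_add_le, zero_add, le_div_iff₀ h2']
    linarith [h1]
  have hp2 : (0:ℝ) < 1 - p^2 := hpk 2 (by omega)
  have hsumslack : 0 ≤ ∑ l ∈ Finset.Icc 3 K, (1-p) * p^(l-1) * (1 / dl (l-1) - U l) := by
    apply Finset.sum_nonneg
    intro l hl
    simp only [Finset.mem_Icc] at hl
    apply mul_nonneg (mul_nonneg hp1'.le (pow_nonneg hp0.le _))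
    exact hslack l (by omega) (by omega)
  constructor
  · intro hsumEq
    -- first slack is zero
    have hz : (1-p^2) * (1 / dl 1 - U 2) = 0 := by
      have h0 : (1-p^2) * (1 / dl 1 - U 2)
          + ∑ l ∈ Finset.Icc 3 K, (1-p) * p^(l-1) * (1 / dl (l-1) - U l) = 0 := by
        rw [← hkey]
        linarith [hsumEq]
      have hnn := mul_nonneg hp2.le (hslack 2 le_rfl hK)
      linarith [hsumslack, hnn, h0]
    have hU2 : dl 1 * U 2 = 1 := by
      have : 1 / dl 1 - U 2 = 0 := by
        rcases mul_eq_zero.mp hz with h | h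
        · linarith
        · exact h
      have hU2v : U 2 = 1 / dl 1 := by linarith
      rw [hU2v]
      field_simp
    -- termwise equality at m = 2
    have hterm2 : ∀ k ∈ Finset.Icc 2 K, 0 ≤ E k * (c 2 k - dl 1 / (1 - p^k)) := by
      intro k hk
      simp only [Finset.mem_Icc] at hk
      apply mul_nonneg (hEpos k (by omega) (by omega)).le
      have := rowineq k (by simp only [Finset.mem_Icc]; omega) 2 le_rfl (by omega)
      rw [sub_nonneg, div_le_iff₀ (hpk k (by omega))]
      rw [show (2:ℕ)-1 = 1 from rfl] at this
      linarith [this, mul_comm (c 2 k) (1 - p^k)]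
    have hzero2 : ∑ k ∈ Finset.Icc 2 K, E k * (c 2 k - dl 1 / (1 - p^k)) = 0 := by
      have h1 : ∑ k ∈ Finset.Icc 2 K, E k * (c 2 k - dl 1 / (1 - p^k))
          = (∑ k ∈ Finset.Icc 2 K, E k * c 2 k)
            - ∑ k ∈ Finset.Icc 2 K, E k * (dl 1 / (1 - p^k)) := by
        rw [← Finset.sum_sub_distrib]
        apply Finset.sum_congr rfl
        intro k hk
        ring
      rw [h1, hstar 2 le_rfl hK, ← hUmul 2 le_rfl hK, hU2]
      ring
    have htz := (Finset.sum_eq_zero_iff_of_nonneg hterm2).mp hzero2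
    intro k hk
    have hk' : 2 ≤ k ∧ k ≤ K := by simpa [Finset.mem_Icc] using hk
    have hEk := hEpos k hk'.1 hk'.2
    have h1 := htz k hk
    have h2 : c 2 k - dl 1 / (1 - p^k) = 0 := by
      rcases mul_eq_zero.mp h1 with h | h
      · exact absurd h hEk.ne'
      · exact h
    have h3 : (1 - p^k) * c 2 k = dl 1 := by
      have hne := (hpk k (by omega)).ne'
      have : c 2 k = dl 1 / (1 - p^k) := by linarith
      rw [this]
      field_simp
    exact hroweq k hk h3
  · intro hgall
    have hUeq : ∀ m : ℕ, 2 ≤ m → m ≤ K → 1 / dl (m-1) - U m = 0 := by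
      intro m h2 hmK
      have hdlm := hdlpos (m-1) (by omega)
      have h1 : dl (m-1) * U m = 1 := by
        rw [hUmul m h2 hmK]
        calc ∑ k ∈ Finset.Icc m K, E k * (dl (m-1) / (1 - p^k))
            = ∑ k ∈ Finset.Icc m K, E k * c m k := by
              apply Finset.sum_congr rfl
              intro k hk
              simp only [Finset.mem_Icc] at hk
              congr 1
              have := hgeo hgall m k h2 (by omega) (by omega)
              have hne := (hpk k (by omega)).ne'
              rw [div_eq_iff hne]
              linarith [this]
          _ = 1 := hstar m h2 hmK
      have hUv : U m = 1 / dl (m-1) := by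
        rw [eq_div_iff hdlm.ne']
        linear_combination h1
      rw [hUv]
      ring
    have hz : ((1 + p) / (1 - p)
        + ∑ r ∈ Finset.Icc 1 (K - 2),
            (1 - p) * p ^ (K - r)
              / (((K - r : ℕ) : ℝ) * p ^ (K - r + 1)
                  - ((K - r + 1 : ℕ) : ℝ) * p ^ (K - r) + 1))
        - ∑ r ∈ Finset.Icc 1 (K-1), D r = 0 := by
      rw [hkey, hUeq 2 le_rfl hK]
      have : ∑ l ∈ Finset.Icc 3 K, (1-p) * p^(l-1) * (1 / dl (l-1) - U l) = 0 := by
        apply Finset.sum_eq_zero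
        intro l hl
        simp only [Finset.mem_Icc] at hl
        rw [hUeq l (by omega) (by omega)]
        ring
      rw [this]
      ring
    linarith [hz]
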